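/- For any two weight vectors ω, χ : Fin (n+1) → ℕ with positive coordinates, there exist a finite abelian group G and a continuous action of G on the weighted projective space P(ω) whose orbit space (with the quotient topology) is homeomorphic to P(χ). In other words, any weighted projective space arises as the orbit space of any other of the same dimension under the action of a finite abelian group. -/

import Mathlib

noncomputable section

/-- The unit sphere in `ℂ^m` (the sphere `S^{2m-1}`). -/
abbrev Sph (m : ℕ) : Type := {z : Fin m → ℂ // ∑ i, ‖z i‖ ^ 2 = 1}

/-- The relation on the sphere whose quotient is the weighted projective space `P(χ)`:
`z ∼ w` iff `w = t ·_χ z` for some unimodular `t`. -/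
def wRel (m : ℕ) (χ : Fin m → ℕ) (z w : Sph m) : Prop :=
  ∃ t : ℂ, ‖t‖ = 1 ∧ ∀ i, (w : Fin m → ℂ) i = t ^ χ i * (z : Fin m → ℂ) i

/-- The weighted projective space `P(χ)`, with the quotient topology. -/
abbrev WP (m : ℕ) (χ : Fin m → ℕ) : Type := Quot (wRel m χ)

/-- The class `[z]_χ` of a point of the sphere in `P(χ)`. -/
def wpMk (m : ℕ) (χ : Fin m → ℕ) (z : Sph m) : WP m χ := Quot.mk _ z

/-- `s(χ,ω)`: the least positive integer `s` with `ω i ∣ s * χ i` for all `i`. -/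
def sVal (m : ℕ) (χ ω : Fin m → ℕ) : ℕ := sInf {s : ℕ | 0 < s ∧ ∀ i, ω i ∣ s * χ i}

/-- The exponents `d i = s(χ,ω)·χ i/ω i` of the map `e(χ/ω)`. -/
def dExp (m : ℕ) (χ ω : Fin m → ℕ) (i : Fin m) : ℕ := sVal m χ ω * χ i / ω i

/-- `IsNorm m χ v w` says that `w` is the normalisation `N_χ(v)`, i.e. `w` lies on the
sphere and has the form `(λ^{χ_0} v_0, …)` for some real `λ > 0`. -/
def IsNorm (m : ℕ) (χ : Fin m → ℕ) (v : Fin m → ℂ) (w : Sph m) : Prop :=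
  ∃ l : ℝ, 0 < l ∧ ∀ i, (w : Fin m → ℂ) i = (l : ℂ) ^ χ i * v i

/-- Coordinatewise powers of a point of the sphere. -/
def powVec (m : ℕ) (d : Fin m → ℕ) (z : Sph m) : Fin m → ℂ :=
  fun i => (z : Fin m → ℂ) i ^ d i

/-- `IsEMap m χ ω e` says that `e` is the canonical map `e(χ/ω) : P(ω) → P(χ)`:
it is continuous and sends `[z]_ω` to `[N_χ(z_0^{d_0}, …, z_n^{d_n})]_χ`. -/
def IsEMap (m : ℕ) (χ ω : Fin m → ℕ) (e : WP m ω → WP m χ) : Prop :=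
  Continuous e ∧ ∀ z w : Sph m,
    IsNorm m χ (powVec m (dExp m χ ω) z) w → e (wpMk m ω z) = wpMk m χ w

/-- `FiniteGroupQuotientHomeo G X Y` says there is a continuous action of the finite abelian
group `G` on `X` whose orbit space (with the quotient topology) is homeomorphic to `Y`. -/
def FiniteGroupQuotientHomeo (G : Type) [CommGroup G] [Fintype G]
    (X Y : Type) [TopologicalSpace X] [TopologicalSpace Y] : Prop :=
  ∃ a : G → X → X,
    (∀ x, a 1 x = x) ∧
    (∀ g h x, a (g * h) x = a g (a h x)) ∧
    (∀ g, Continuous (a g)) ∧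
    Nonempty (Quot (fun x y => ∃ g : G, a g x = y) ≃ₜ Y)

/-! ### Auxiliary development -/

section Aux

open Complex Finset

variable (m : ℕ) (χ ω : Fin m → ℕ)

lemma sVal_spec (hω : ∀ i, 1 ≤ ω i) :
    0 < sVal m χ ω ∧ ∀ i, ω i ∣ sVal m χ ω * χ i := by
  have hmem : (∏ i, ω i) ∈ {s : ℕ | 0 < s ∧ ∀ i, ω i ∣ s * χ i} :=
    ⟨Finset.prod_pos fun i _ => hω i,
     fun i => Dvd.dvd.mul_right (Finset.dvd_prod_of_mem ω (Finset.mem_univ i)) _⟩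
  exact Nat.sInf_mem ⟨_, hmem⟩

lemma dExp_mul_eq (hω : ∀ i, 1 ≤ ω i) (i : Fin m) :
    dExp m χ ω i * ω i = sVal m χ ω * χ i :=
  Nat.div_mul_cancel ((sVal_spec m χ ω hω).2 i)

lemma dExp_pos (hχ : ∀ i, 1 ≤ χ i) (hω : ∀ i, 1 ≤ ω i) (i : Fin m) :
    0 < dExp m χ ω i := by
  have h := dExp_mul_eq m χ ω hω i
  rcases Nat.eq_zero_or_pos (dExp m χ ω i) with h0 | h1
  · exfalso
    rw [h0, zero_mul] at h
    have : 0 < sVal m χ ω * χ i :=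
      Nat.mul_pos (sVal_spec m χ ω hω).1 (hχ i)
    omega
  · exact h1

lemma sph_exists_ne (z : Sph m) : ∃ i, (z : Fin m → ℂ) i ≠ 0 := by
  by_contra h
  push_neg at h
  have h2 := z.2
  simp only [h, map_zero] at h2
  simp at h2

lemma sph_compactSpace : CompactSpace (Sph m) := by
  have hcl : IsClosed {z : Fin m → ℂ | ∑ i, ‖z i‖ ^ 2 = 1} :=
    isClosed_eq (continuous_finset_sum _ fun i _ =>
      (continuous_norm.comp (continuous_apply i)).pow 2) continuous_const
  suffices h : IsCompact {z : Fin m → ℂ | ∑ i, ‖z i‖ ^ 2 = 1} from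
    isCompact_iff_compactSpace.mp h
  refine IsCompact.of_isClosed_subset (isCompact_closedBall (0 : Fin m → ℂ) 1) hcl ?_
  intro z hz
  rw [mem_closedBall_zero_iff, pi_norm_le_iff_of_nonneg zero_le_one]
  intro i
  have hle : ‖z i‖ ^ 2 ≤ 1 := by
    have := Finset.single_le_sum (f := fun j => ‖z j‖ ^ 2)
      (fun j _ => by positivity) (Finset.mem_univ i)
    rw [hz] at this
    exact this
  have h0 : (0:ℝ) ≤ ‖z i‖ := (norm_nonneg _)
  nlinarith

lemma quot_compactSpace {X : Type} [TopologicalSpace X] [CompactSpace X]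
    (r : X → X → Prop) : CompactSpace (Quot r) :=
  ⟨by rw [← Set.range_quot_mk r]; exact isCompact_range continuous_quot_mk⟩

lemma wRel_equivalence : Equivalence (wRel m χ) := by
  constructor
  · intro z
    exact ⟨1, by simp, fun i => by simp⟩
  · rintro z w ⟨t, ht, hw⟩
    have ht0 : t ≠ 0 := fun h => by simp [h] at ht
    refine ⟨t⁻¹, by rw [norm_inv, ht, inv_one], fun i => ?_⟩
    rw [hw i, ← mul_assoc, ← mul_pow, inv_mul_cancel₀ ht0, one_pow, one_mul]
  · rintro x y z ⟨t₁, ht₁, hy⟩ ⟨t₂, ht₂, hz⟩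
    refine ⟨t₂ * t₁, by rw [norm_mul, ht₁, ht₂, one_mul], fun i => ?_⟩
    rw [hz i, hy i, ← mul_assoc, mul_pow]

lemma quot_mk_eq_iff (z w : Sph m) :
    Quot.mk (wRel m χ) z = Quot.mk (wRel m χ) w ↔ wRel m χ z w :=
  Quot.eq.trans (wRel_equivalence m χ).eqvGen_iff

/-- Multiplication by a unimodular `t` with weights `χ`, as a self-map of the sphere. -/
def mulT (t : ℂ) (ht : ‖t‖ = 1) (z : Sph m) : Sph m :=
  ⟨fun i => t ^ χ i * (z : Fin m → ℂ) i, by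
    have h : ∀ i, ‖t ^ χ i * (z : Fin m → ℂ) i‖ ^ 2
        = ‖(z : Fin m → ℂ) i‖ ^ 2 := fun i => by
      rw [norm_mul, norm_pow, ht, one_pow, one_mul]
    simp_rw [h]
    exact z.2⟩

lemma continuous_mulT (t : ℂ) (ht : ‖t‖ = 1) :
    Continuous (mulT m χ t ht) := by
  apply Continuous.subtype_mk
  exact continuous_pi fun i =>
    continuous_const.mul ((continuous_apply i).comp continuous_subtype_val)

lemma mulT_inv_comp (t : ℂ) (ht : ‖t‖ = 1) (hinv : ‖t⁻¹‖ = 1)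
    (z : Sph m) : mulT m χ t⁻¹ hinv (mulT m χ t ht z) = z := by
  have ht0 : t ≠ 0 := fun h => by simp [h] at ht
  apply Subtype.ext
  funext i
  show t⁻¹ ^ χ i * (t ^ χ i * _) = _
  rw [← mul_assoc, ← mul_pow, inv_mul_cancel₀ ht0, one_pow, one_mul]

lemma mulT_comp_inv (t : ℂ) (ht : ‖t‖ = 1) (hinv : ‖t⁻¹‖ = 1)
    (z : Sph m) : mulT m χ t ht (mulT m χ t⁻¹ hinv z) = z := by
  have ht0 : t ≠ 0 := fun h => by simp [h] at ht
  apply Subtype.ext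
  funext i
  show t ^ χ i * (t⁻¹ ^ χ i * _) = _
  rw [← mul_assoc, ← mul_pow, mul_inv_cancel₀ ht0, one_pow, one_mul]

lemma isOpenMap_qmk : IsOpenMap (Quot.mk (wRel m χ)) := by
  intro U hU
  rw [← isQuotientMap_quot_mk.isOpen_preimage]
  have key : Quot.mk (wRel m χ) ⁻¹' (Quot.mk (wRel m χ) '' U)
      = ⋃ t : {t : ℂ // ‖t‖ = 1}, mulT m χ t.1 t.2 '' U := by
    ext w
    simp only [Set.mem_preimage, Set.mem_image, Set.mem_iUnion]
    constructor
    · rintro ⟨z, hzU, hzw⟩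
      obtain ⟨t, ht, hw⟩ := (quot_mk_eq_iff m χ z w).mp hzw
      exact ⟨⟨t, ht⟩, z, hzU, Subtype.ext (funext fun i => (hw i).symm)⟩
    · rintro ⟨t, z, hzU, rfl⟩
      exact ⟨z, hzU, (quot_mk_eq_iff m χ _ _).mpr ⟨t.1, t.2, fun i => rfl⟩⟩
  rw [key]
  refine isOpen_iUnion fun t => ?_
  have hinv : ‖t.1⁻¹‖ = 1 := by rw [norm_inv, t.2, inv_one]
  have heq : Set.image (mulT m χ t.1 t.2) = Set.preimage (mulT m χ t.1⁻¹ hinv) :=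
    Set.image_eq_preimage_of_inverse (mulT_inv_comp m χ t.1 t.2 hinv)
      (mulT_comp_inv m χ t.1 t.2 hinv)
  rw [heq]
  exact hU.preimage (continuous_mulT m χ t.1⁻¹ hinv)

lemma circle_compactSpace : CompactSpace {t : ℂ // ‖t‖ = 1} := by
  suffices h : IsCompact {t : ℂ | ‖t‖ = 1} from isCompact_iff_compactSpace.mp h
  have : {t : ℂ | ‖t‖ = 1} = Metric.sphere (0 : ℂ) 1 := by
    ext t
    simp [Metric.mem_sphere, Complex.dist_eq]
  rw [this]
  exact isCompact_sphere 0 1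

lemma t2_WP : T2Space (WP m χ) := by
  haveI := sph_compactSpace m
  haveI := circle_compactSpace
  rw [t2_iff_isClosed_diagonal]
  have hq : Topology.IsQuotientMap
      (Prod.map (Quot.mk (wRel m χ)) (Quot.mk (wRel m χ))) :=
    ((isOpenMap_qmk m χ).prodMap (isOpenMap_qmk m χ)).isQuotientMap
      (continuous_quot_mk.prodMap continuous_quot_mk)
      (Quot.mk_surjective.prodMap Quot.mk_surjective)
  rw [← hq.isClosed_preimage]
  have key : Prod.map (Quot.mk (wRel m χ)) (Quot.mk (wRel m χ)) ⁻¹' Set.diagonal (WP m χ)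
      = Set.range (fun p : {t : ℂ // ‖t‖ = 1} × Sph m =>
          (p.2, mulT m χ p.1.1 p.1.2 p.2)) := by
    ext ⟨a, b⟩
    simp only [Set.mem_preimage, Set.mem_range, Prod.map, Set.mem_diagonal_iff]
    rw [quot_mk_eq_iff]
    constructor
    · rintro ⟨t, ht, hb⟩
      refine ⟨⟨⟨t, ht⟩, a⟩, Prod.ext rfl ?_⟩
      exact Subtype.ext (funext fun i => (hb i).symm)
    · rintro ⟨⟨t, z⟩, hp⟩
      obtain ⟨h1, h2⟩ := Prod.ext_iff.mp hp
      dsimp only at h1 h2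
      subst h1
      exact ⟨t.1, t.2, fun i => by rw [← h2]; rfl⟩
  rw [key]
  have hcont : Continuous (fun p : {t : ℂ // ‖t‖ = 1} × Sph m =>
      (p.2, mulT m χ p.1.1 p.1.2 p.2)) := by
    refine Continuous.prodMk continuous_snd ?_
    apply Continuous.subtype_mk
    refine continuous_pi fun i => Continuous.mul ?_ ?_
    · exact ((continuous_subtype_val.comp continuous_fst).pow _)
    · exact (continuous_apply i).comp (continuous_subtype_val.comp continuous_snd)
  exact (isCompact_range hcont).isClosed

/-! ### The map `ψ` -/

/-- `S(z) = Σ |z_i^{d_i}|²`. -/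
def Sd (z : Sph m) : ℝ := ∑ i, ‖(z : Fin m → ℂ) i ^ dExp m χ ω i‖ ^ 2

lemma Sd_pos (z : Sph m) : 0 < Sd m χ ω z := by
  obtain ⟨i, hi⟩ := sph_exists_ne m z
  refine Finset.sum_pos' (fun j _ => by positivity) ⟨i, Finset.mem_univ i, ?_⟩
  have : (z : Fin m → ℂ) i ^ dExp m χ ω i ≠ 0 := pow_ne_zero _ hi
  exact pow_pos (norm_pos_iff.mpr this) 2

lemma Sd_continuous : Continuous (Sd m χ ω) :=
  continuous_finset_sum _ fun i _ =>
    (continuous_norm.comp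
      (((continuous_apply i).comp continuous_subtype_val).pow _)).pow 2

/-- The map `z ↦ z^d / √(S z)` on the sphere. -/
def psi (z : Sph m) : Sph m :=
  ⟨fun i => (z : Fin m → ℂ) i ^ dExp m χ ω i / ((Real.sqrt (Sd m χ ω z) : ℝ) : ℂ), by
    have hS := Sd_pos m χ ω z
    have hs : 0 < Real.sqrt (Sd m χ ω z) := Real.sqrt_pos.mpr hS
    have h : ∀ i, ‖(z : Fin m → ℂ) i ^ dExp m χ ω i
        / ((Real.sqrt (Sd m χ ω z) : ℝ) : ℂ)‖ ^ 2
        = ‖(z : Fin m → ℂ) i ^ dExp m χ ω i‖ ^ 2 / Sd m χ ω z := fun i => by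
      rw [norm_div, Complex.norm_real, Real.norm_eq_abs, _root_.abs_of_pos hs, div_pow,
        Real.sq_sqrt hS.le]
    simp_rw [h]
    rw [← Finset.sum_div]
    exact div_self (ne_of_gt hS)⟩

lemma psi_continuous : Continuous (psi m χ ω) := by
  apply Continuous.subtype_mk
  refine continuous_pi fun i => Continuous.div ?_ ?_ ?_
  · exact ((continuous_apply i).comp continuous_subtype_val).pow _
  · exact Complex.continuous_ofReal.comp (Real.continuous_sqrt.comp (Sd_continuous m χ ω))
  · intro z
    simp only [ne_eq, Complex.ofReal_eq_zero]
    exact ne_of_gt (Real.sqrt_pos.mpr (Sd_pos m χ ω z))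

lemma psi_apply (z : Sph m) (i : Fin m) :
    (psi m χ ω z : Fin m → ℂ) i
      = (z : Fin m → ℂ) i ^ dExp m χ ω i / ((Real.sqrt (Sd m χ ω z) : ℝ) : ℂ) := rfl

lemma nonneg_pow_eq_one {x : ℝ} (hx : 0 ≤ x) {k : ℕ} (hk : k ≠ 0) (h : x ^ k = 1) :
    x = 1 := by
  rcases lt_trichotomy x 1 with h1 | h1 | h1
  · exfalso
    have := pow_lt_one₀ hx h1 hk
    rw [h] at this
    exact lt_irrefl _ this
  · exact h1
  · exfalso
    have := one_lt_pow₀ h1 hk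
    rw [h] at this
    exact lt_irrefl _ this

end Aux

/-! ### Main theorem -/

open Complex Finset in
/-- Any weighted projective space `P(χ)` arises as the orbit space of any
other weighted projective space `P(ω)` of the same dimension under a continuous action of a
finite abelian group. -/
theorem statement2 (n : ℕ) (hn : 1 ≤ n) (ω χ : Fin (n + 1) → ℕ)
    (hω : ∀ i, 1 ≤ ω i) (hχ : ∀ i, 1 ≤ χ i) :
    ∃ (G : Type) (i1 : CommGroup G) (i2 : Fintype G),
      @FiniteGroupQuotientHomeo G i1 i2 (WP (n + 1) ω) (WP (n + 1) χ)
        inferInstance inferInstance := by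
  classical
  have hspos : 0 < sVal (n+1) χ ω := (sVal_spec (n+1) χ ω hω).1
  have hdpos : ∀ i, 0 < dExp (n+1) χ ω i := dExp_pos (n+1) χ ω hχ hω
  have hdω : ∀ i, dExp (n+1) χ ω i * ω i = sVal (n+1) χ ω * χ i := dExp_mul_eq (n+1) χ ω hω
  haveI : ∀ i : Fin (n+1), NeZero (dExp (n+1) χ ω i) := fun i => ⟨(hdpos i).ne'⟩
  haveI := sph_compactSpace (n+1)
  haveI : CompactSpace (WP (n+1) ω) := quot_compactSpace _
  haveI : T2Space (WP (n+1) χ) := t2_WP (n+1) χ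
  refine ⟨∀ i : Fin (n+1), rootsOfUnity (dExp (n+1) χ ω i) ℂ, inferInstance, Fintype.ofFinite _, ?_⟩
  set G := ∀ i : Fin (n+1), rootsOfUnity (dExp (n+1) χ ω i) ℂ with hG
  have hgpow : ∀ (g : G) (i : Fin (n+1)), (((g i : ℂˣ) : ℂ)) ^ dExp (n+1) χ ω i = 1 := by
    intro g i
    have h1 : ((g i : ℂˣ)) ^ dExp (n+1) χ ω i = 1 := (_root_.mem_rootsOfUnity _ _).mp (g i).2
    calc (((g i : ℂˣ) : ℂ)) ^ dExp (n+1) χ ω i = (((g i : ℂˣ) ^ dExp (n+1) χ ω i : ℂˣ) : ℂ) :=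
          (Units.val_pow_eq_pow_val _ _).symm
      _ = 1 := by rw [h1, Units.val_one]
  have hgabs : ∀ (g : G) (i : Fin (n+1)), ‖((g i : ℂˣ) : ℂ)‖ = 1 := by
    intro g i
    have h1 := congrArg norm (hgpow g i)
    rw [norm_pow, norm_one] at h1
    exact nonneg_pow_eq_one (norm_nonneg _) (hdpos i).ne' h1
  -- the sphere-level action
  have actS_mem : ∀ (g : G) (z : Sph (n+1)),
      ∑ i, ‖((g i : ℂˣ) : ℂ) * (z : Fin (n+1) → ℂ) i‖ ^ 2 = 1 := by
    intro g z
    have h : ∀ i, ‖((g i : ℂˣ) : ℂ) * (z : Fin (n+1) → ℂ) i‖ ^ 2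
        = ‖(z : Fin (n+1) → ℂ) i‖ ^ 2 := fun i => by
      rw [norm_mul, hgabs g i, one_mul]
    simp_rw [h]
    exact z.2
  set actS : G → Sph (n+1) → Sph (n+1) :=
    fun g z => ⟨fun i => ((g i : ℂˣ) : ℂ) * (z : Fin (n+1) → ℂ) i, actS_mem g z⟩ with hactS
  have aSound : ∀ (g : G) (z w : Sph (n+1)), wRel (n+1) ω z w →
      Quot.mk (wRel (n+1) ω) (actS g z) = Quot.mk (wRel (n+1) ω) (actS g w) := by
    rintro g z w ⟨t, ht, hw⟩
    refine Quot.sound ⟨t, ht, fun i => ?_⟩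
    show ((g i : ℂˣ) : ℂ) * (w : Fin (n+1) → ℂ) i
      = t ^ ω i * (((g i : ℂˣ) : ℂ) * (z : Fin (n+1) → ℂ) i)
    rw [hw i]; ring
  set a : G → WP (n+1) ω → WP (n+1) ω :=
    fun g => Quot.lift (fun z => Quot.mk (wRel (n+1) ω) (actS g z)) (aSound g) with ha
  -- ψ descends to a map e : WP ω → WP χ
  have eSound : ∀ z w : Sph (n+1), wRel (n+1) ω z w →
      Quot.mk (wRel (n+1) χ) (psi (n+1) χ ω z) = Quot.mk (wRel (n+1) χ) (psi (n+1) χ ω w) := by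
    rintro z w ⟨t, ht, hw⟩
    have hpow : ∀ i, (w : Fin (n+1) → ℂ) i ^ dExp (n+1) χ ω i
        = (t ^ sVal (n+1) χ ω) ^ χ i * (z : Fin (n+1) → ℂ) i ^ dExp (n+1) χ ω i := by
      intro i
      rw [hw i, mul_pow, ← pow_mul, ← pow_mul, mul_comm (ω i) (dExp (n+1) χ ω i), hdω i,
        mul_comm (sVal (n+1) χ ω) (χ i), pow_mul]
    have hSd : Sd (n+1) χ ω w = Sd (n+1) χ ω z := by
      unfold Sd
      refine Finset.sum_congr rfl fun i _ => ?_
      rw [hpow i, norm_mul, norm_pow, norm_pow, ht, one_pow, one_pow, one_mul]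
    refine Quot.sound ⟨t ^ sVal (n+1) χ ω, by rw [norm_pow, ht, one_pow], fun i => ?_⟩
    rw [psi_apply, psi_apply, hSd, hpow i, mul_div_assoc]
  set e : WP (n+1) ω → WP (n+1) χ :=
    Quot.lift (fun z => Quot.mk (wRel (n+1) χ) (psi (n+1) χ ω z)) eSound with he
  -- e is invariant under the action
  have hinva : ∀ (g : G) (x : WP (n+1) ω), e (a g x) = e x := by
    intro g x
    induction x using Quot.ind with
    | _ z =>
      show Quot.mk (wRel (n+1) χ) (psi (n+1) χ ω (actS g z)) = Quot.mk (wRel (n+1) χ) (psi (n+1) χ ω z)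
      have hpsi : psi (n+1) χ ω (actS g z) = psi (n+1) χ ω z := by
        have hSd : Sd (n+1) χ ω (actS g z) = Sd (n+1) χ ω z := by
          unfold Sd
          refine Finset.sum_congr rfl fun i _ => ?_
          show ‖(((g i : ℂˣ) : ℂ) * (z : Fin (n+1) → ℂ) i) ^ dExp (n+1) χ ω i‖ ^ 2 = _
          rw [mul_pow, hgpow g i, one_mul]
        apply Subtype.ext
        funext i
        rw [psi_apply, psi_apply, hSd]
        show (((g i : ℂˣ) : ℂ) * (z : Fin (n+1) → ℂ) i) ^ dExp (n+1) χ ω i / _ = _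
        rw [mul_pow, hgpow g i, one_mul]
      rw [hpsi]
  set F : Quot (fun x y => ∃ g : G, a g x = y) → WP (n+1) χ :=
    Quot.lift e (fun x y hxy => by obtain ⟨g, hg⟩ := hxy; rw [← hg, hinva g x]) with hF
  -- surjectivity of ψ
  have psi_surj : ∀ w : Sph (n+1), ∃ z : Sph (n+1), psi (n+1) χ ω z = w := by
    intro w
    obtain ⟨i₀, hi₀⟩ := sph_exists_ne (n+1) w
    have hv : ∀ i, ∃ v : ℂ, v ^ dExp (n+1) χ ω i = (w : Fin (n+1) → ℂ) i := fun i =>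
      IsAlgClosed.exists_pow_nat_eq _ (hdpos i)
    choose v hvd using hv
    have hv₀ : v i₀ ≠ 0 := by
      intro h
      rw [← hvd i₀, h, zero_pow (hdpos i₀).ne'] at hi₀
      exact hi₀ rfl
    set c : ℝ := ‖v i₀‖ ^ 2 with hc
    have hcpos : 0 < c := by
      have := norm_pos_iff.mpr hv₀; positivity
    set x : ℝ := max 1 c⁻¹ with hx
    have hx1 : (1:ℝ) ≤ x := le_max_left _ _
    have hx0 : (0:ℝ) ≤ x := by linarith
    set M : ℝ := x ^ dExp (n+1) χ ω i₀ with hM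
    have hM0 : (0:ℝ) ≤ M := pow_nonneg hx0 _
    set f : ℝ → ℝ := fun r => ∑ i, r ^ ((2:ℝ) / dExp (n+1) χ ω i) * ‖v i‖ ^ 2
      with hf
    have hf0 : f 0 = 0 := by
      simp only [hf]
      refine Finset.sum_eq_zero fun i _ => ?_
      rw [Real.zero_rpow (by
        have := hdpos i
        positivity), zero_mul]
    have hfM : 1 ≤ f M := by
      have hterm : M ^ ((2:ℝ) / dExp (n+1) χ ω i₀) * ‖v i₀‖ ^ 2 ≤ f M :=
        Finset.single_le_sum
          (f := fun i => M ^ ((2:ℝ) / dExp (n+1) χ ω i) * ‖v i‖ ^ 2)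
          (fun i _ => by
            have := Real.rpow_nonneg hM0 ((2:ℝ) / dExp (n+1) χ ω i)
            positivity) (Finset.mem_univ i₀)
      have hMpow : M ^ ((2:ℝ) / dExp (n+1) χ ω i₀) = x ^ (2:ℝ) := by
        rw [hM, ← Real.rpow_natCast x (dExp (n+1) χ ω i₀), ← Real.rpow_mul hx0]
        congr 1
        have : (dExp (n+1) χ ω i₀ : ℝ) ≠ 0 := by exact_mod_cast (hdpos i₀).ne'
        field_simp
      have hx2 : x ^ (2:ℝ) = x * x := by
        rw [show (2:ℝ) = ((2:ℕ):ℝ) by norm_num, Real.rpow_natCast, sq]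
      have hxc : c⁻¹ ≤ x := le_max_right _ _
      have hcc : c⁻¹ * c = 1 := inv_mul_cancel₀ (ne_of_gt hcpos)
      have h1M : 1 ≤ M ^ ((2:ℝ) / dExp (n+1) χ ω i₀) * c := by
        rw [hMpow, hx2]
        have hkey : 0 ≤ x * c * (x - c⁻¹) :=
          mul_nonneg (mul_nonneg (le_trans zero_le_one hx1) hcpos.le)
            (sub_nonneg.mpr hxc)
        nlinarith [hkey, hcc, hx1]
      calc (1:ℝ) ≤ M ^ ((2:ℝ) / dExp (n+1) χ ω i₀) * c := h1M
        _ ≤ f M := hterm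
    have hfc : ContinuousOn f (Set.Icc 0 M) := by
      refine continuousOn_finset_sum _ fun i _ => ContinuousOn.mul ?_ continuousOn_const
      intro r _
      refine (Real.continuousAt_rpow_const r _ (Or.inr ?_)).continuousWithinAt
      have := hdpos i
      positivity
    have h1mem : (1:ℝ) ∈ Set.Icc (f 0) (f M) := ⟨by rw [hf0]; norm_num, hfM⟩
    obtain ⟨r, hrI, hfr⟩ := intermediate_value_Icc hM0 hfc h1mem
    have hr0 : 0 ≤ r := hrI.1
    have hrpos : 0 < r := by
      rcases lt_or_eq_of_le hr0 with h | h
      · exact h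
      · exfalso; rw [← h, hf0] at hfr; norm_num at hfr
    have hzmem : ∑ i, ‖((r ^ ((1:ℝ) / dExp (n+1) χ ω i) : ℝ) : ℂ) * v i‖ ^ 2 = 1 := by
      have h : ∀ i, ‖((r ^ ((1:ℝ) / dExp (n+1) χ ω i) : ℝ) : ℂ) * v i‖ ^ 2
          = r ^ ((2:ℝ) / dExp (n+1) χ ω i) * ‖v i‖ ^ 2 := by
        intro i
        rw [norm_mul, Complex.norm_real, Real.norm_eq_abs, _root_.abs_of_nonneg (Real.rpow_nonneg hr0 _),
          mul_pow]
        congr 1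
        rw [← Real.rpow_natCast (r ^ ((1:ℝ) / dExp (n+1) χ ω i)) 2, ← Real.rpow_mul hr0]
        congr 1
        push_cast
        ring
      simp_rw [h]
      exact hfr
    set z : Sph (n+1) := ⟨fun i => ((r ^ ((1:ℝ) / dExp (n+1) χ ω i) : ℝ) : ℂ) * v i, hzmem⟩ with hz
    refine ⟨z, ?_⟩
    have hzd : ∀ i, (z : Fin (n+1) → ℂ) i ^ dExp (n+1) χ ω i = (r : ℂ) * (w : Fin (n+1) → ℂ) i := by
      intro i
      show (((r ^ ((1:ℝ) / dExp (n+1) χ ω i) : ℝ) : ℂ) * v i) ^ dExp (n+1) χ ω i = _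
      rw [mul_pow, hvd i, ← Complex.ofReal_pow,
        ← Real.rpow_natCast (r ^ ((1:ℝ) / dExp (n+1) χ ω i)) (dExp (n+1) χ ω i),
        ← Real.rpow_mul hr0, one_div,
        inv_mul_cancel₀ (by exact_mod_cast (hdpos i).ne' : ((dExp (n+1) χ ω i : ℝ)) ≠ 0),
        Real.rpow_one]
    have hSdz : Sd (n+1) χ ω z = r ^ 2 := by
      unfold Sd
      have h : ∀ i, ‖(z : Fin (n+1) → ℂ) i ^ dExp (n+1) χ ω i‖ ^ 2
          = r ^ 2 * ‖(w : Fin (n+1) → ℂ) i‖ ^ 2 := fun i => by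
        rw [hzd i, norm_mul, Complex.norm_real, Real.norm_eq_abs, _root_.abs_of_nonneg hr0, mul_pow]
      simp_rw [h]
      rw [← Finset.mul_sum, w.2, mul_one]
    apply Subtype.ext
    funext i
    rw [psi_apply, hSdz, hzd i, Real.sqrt_sq hr0, mul_comm, mul_div_assoc,
      div_self (by exact_mod_cast hrpos.ne' : ((r:ℂ)) ≠ 0), mul_one]
  -- injectivity ingredient
  have psi_inj : ∀ z z' : Sph (n+1), wRel (n+1) χ (psi (n+1) χ ω z) (psi (n+1) χ ω z') →
      ∃ (g : G) (t : ℂ), ‖t‖ = 1 ∧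
        ∀ i, (z' : Fin (n+1) → ℂ) i = t ^ ω i * (((g i : ℂˣ) : ℂ) * (z : Fin (n+1) → ℂ) i) := by
    intro z z' hrel
    obtain ⟨t, ht, hrel⟩ := hrel
    have ht0 : t ≠ 0 := fun h => by simp [h] at ht
    have hSzpos := Sd_pos (n+1) χ ω z
    have hSz'pos := Sd_pos (n+1) χ ω z'
    have hsz : 0 < Real.sqrt (Sd (n+1) χ ω z) := Real.sqrt_pos.mpr hSzpos
    have hsz' : 0 < Real.sqrt (Sd (n+1) χ ω z') := Real.sqrt_pos.mpr hSz'pos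
    set ρ : ℝ := Real.sqrt (Sd (n+1) χ ω z') / Real.sqrt (Sd (n+1) χ ω z) with hρ
    have hρpos : 0 < ρ := div_pos hsz' hsz
    have hmain : ∀ i, (z' : Fin (n+1) → ℂ) i ^ dExp (n+1) χ ω i
        = t ^ χ i * (ρ : ℂ) * (z : Fin (n+1) → ℂ) i ^ dExp (n+1) χ ω i := by
      intro i
      have h := hrel i
      rw [psi_apply, psi_apply] at h
      have h2 := congrArg (fun u : ℂ => u * ((Real.sqrt (Sd (n+1) χ ω z') : ℝ) : ℂ)) h
      rw [div_mul_cancel₀ _ (by exact_mod_cast hsz'.ne' : ((Real.sqrt (Sd (n+1) χ ω z') : ℂ)) ≠ 0)]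
        at h2
      rw [h2, hρ]
      push_cast
      have hsz0 : ((Real.sqrt (Sd (n+1) χ ω z) : ℂ)) ≠ 0 := by exact_mod_cast hsz.ne'
      field_simp
    have habs : ∀ i, ‖(z' : Fin (n+1) → ℂ) i‖ ^ 2
        = ρ ^ ((2:ℝ) / dExp (n+1) χ ω i) * ‖(z : Fin (n+1) → ℂ) i‖ ^ 2 := by
      intro i
      have h := congrArg norm (hmain i)
      rw [norm_pow, norm_mul, norm_mul, norm_pow, ht, one_pow, one_mul, norm_pow,
        Complex.norm_real, Real.norm_eq_abs, _root_.abs_of_pos hρpos] at h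
      have hnn : (0:ℝ) ≤ ‖(z' : Fin (n+1) → ℂ) i‖ := norm_nonneg _
      have hnn2 : (0:ℝ) ≤ ‖(z : Fin (n+1) → ℂ) i‖ := norm_nonneg _
      have key := congrArg (fun u : ℝ => u ^ ((2:ℝ) / dExp (n+1) χ ω i)) h
      rw [← Real.rpow_natCast (‖(z' : Fin (n+1) → ℂ) i‖) (dExp (n+1) χ ω i),
        ← Real.rpow_mul hnn, Real.mul_rpow hρpos.le (by positivity),
        ← Real.rpow_natCast (‖(z : Fin (n+1) → ℂ) i‖) (dExp (n+1) χ ω i),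
        ← Real.rpow_mul hnn2] at key
      have hde : ((dExp (n+1) χ ω i : ℝ)) * ((2:ℝ) / dExp (n+1) χ ω i) = 2 := by
        have : (dExp (n+1) χ ω i : ℝ) ≠ 0 := by exact_mod_cast (hdpos i).ne'
        field_simp
      rw [hde] at key
      calc ‖(z' : Fin (n+1) → ℂ) i‖ ^ 2
          = ‖(z' : Fin (n+1) → ℂ) i‖ ^ (2:ℝ) := by
            rw [← Real.rpow_natCast (‖(z' : Fin (n+1) → ℂ) i‖) 2]; norm_num
        _ = ρ ^ ((2:ℝ) / dExp (n+1) χ ω i) * ‖(z : Fin (n+1) → ℂ) i‖ ^ (2:ℝ) := key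
        _ = ρ ^ ((2:ℝ) / dExp (n+1) χ ω i) * ‖(z : Fin (n+1) → ℂ) i‖ ^ 2 := by
            rw [← Real.rpow_natCast (‖(z : Fin (n+1) → ℂ) i‖) 2]; norm_num
    have hρ1 : ρ = 1 := by
      by_contra hne
      obtain ⟨i₁, hi₁⟩ := sph_exists_ne (n+1) z
      have hc1pos : 0 < ‖(z : Fin (n+1) → ℂ) i₁‖ ^ 2 :=
        pow_pos (norm_pos_iff.mpr hi₁) 2
      have hsum : (1:ℝ) = ∑ i, ρ ^ ((2:ℝ) / dExp (n+1) χ ω i)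
          * ‖(z : Fin (n+1) → ℂ) i‖ ^ 2 :=
        calc (1:ℝ) = ∑ i, ‖(z' : Fin (n+1) → ℂ) i‖ ^ 2 := z'.2.symm
          _ = _ := Finset.sum_congr rfl fun i _ => habs i
      rcases lt_or_gt_of_ne hne with hlt | hgt
      · have hstrict : ∑ i, ρ ^ ((2:ℝ) / dExp (n+1) χ ω i) * ‖(z : Fin (n+1) → ℂ) i‖ ^ 2
            < ∑ i, ‖(z : Fin (n+1) → ℂ) i‖ ^ 2 := by
          refine Finset.sum_lt_sum (fun i _ => ?_) ⟨i₁, Finset.mem_univ i₁, ?_⟩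
          · have h1 : ρ ^ ((2:ℝ) / dExp (n+1) χ ω i) ≤ 1 := by
              calc ρ ^ ((2:ℝ) / dExp (n+1) χ ω i) ≤ 1 ^ ((2:ℝ) / dExp (n+1) χ ω i) :=
                    Real.rpow_le_rpow hρpos.le hlt.le (by have := hdpos i; positivity)
                _ = 1 := Real.one_rpow _
            nlinarith [sq_nonneg (‖(z : Fin (n+1) → ℂ) i‖)]
          · have h1 : ρ ^ ((2:ℝ) / dExp (n+1) χ ω i₁) < 1 := by
              calc ρ ^ ((2:ℝ) / dExp (n+1) χ ω i₁) < 1 ^ ((2:ℝ) / dExp (n+1) χ ω i₁) :=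
                    Real.rpow_lt_rpow hρpos.le hlt (by have := hdpos i₁; positivity)
                _ = 1 := Real.one_rpow _
            nlinarith
        rw [← hsum, z.2] at hstrict
        norm_num at hstrict
      · have hstrict : ∑ i, ‖(z : Fin (n+1) → ℂ) i‖ ^ 2
            < ∑ i, ρ ^ ((2:ℝ) / dExp (n+1) χ ω i) * ‖(z : Fin (n+1) → ℂ) i‖ ^ 2 := by
          refine Finset.sum_lt_sum (fun i _ => ?_) ⟨i₁, Finset.mem_univ i₁, ?_⟩
          · have h1 : 1 ≤ ρ ^ ((2:ℝ) / dExp (n+1) χ ω i) := by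
              calc (1:ℝ) = 1 ^ ((2:ℝ) / dExp (n+1) χ ω i) := (Real.one_rpow _).symm
                _ ≤ ρ ^ ((2:ℝ) / dExp (n+1) χ ω i) :=
                    Real.rpow_le_rpow zero_le_one hgt.le (by have := hdpos i; positivity)
            nlinarith [sq_nonneg (‖(z : Fin (n+1) → ℂ) i‖)]
          · have h1 : 1 < ρ ^ ((2:ℝ) / dExp (n+1) χ ω i₁) := by
              calc (1:ℝ) = 1 ^ ((2:ℝ) / dExp (n+1) χ ω i₁) := (Real.one_rpow _).symm
                _ < ρ ^ ((2:ℝ) / dExp (n+1) χ ω i₁) :=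
                    Real.rpow_lt_rpow zero_le_one hgt (by have := hdpos i₁; positivity)
            nlinarith
        rw [← hsum, z.2] at hstrict
        norm_num at hstrict
    have hmain' : ∀ i, (z' : Fin (n+1) → ℂ) i ^ dExp (n+1) χ ω i
        = t ^ χ i * (z : Fin (n+1) → ℂ) i ^ dExp (n+1) χ ω i := by
      intro i
      have h := hmain i
      rw [hρ1] at h
      simpa using h
    obtain ⟨τ, hτ⟩ := IsAlgClosed.exists_pow_nat_eq t hspos
    have hτ0 : τ ≠ 0 := by
      intro h
      rw [h, zero_pow hspos.ne'] at hτ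
      exact ht0 hτ.symm
    have hτabs : ‖τ‖ = 1 := by
      have h1 : ‖τ‖ ^ sVal (n+1) χ ω = 1 := by rw [← norm_pow, hτ, ht]
      exact nonneg_pow_eq_one (norm_nonneg _) hspos.ne' h1
    have hτχ : ∀ i, (τ ^ ω i) ^ dExp (n+1) χ ω i = t ^ χ i := by
      intro i
      rw [← pow_mul, mul_comm (ω i) (dExp (n+1) χ ω i), hdω i, pow_mul, hτ]
    set ζ : Fin (n+1) → ℂ := fun i =>
      if (z : Fin (n+1) → ℂ) i = 0 then 1
      else (z' : Fin (n+1) → ℂ) i / (τ ^ ω i * (z : Fin (n+1) → ℂ) i) with hζ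
    have hζpow : ∀ i, ζ i ^ dExp (n+1) χ ω i = 1 := by
      intro i
      by_cases hzi : (z : Fin (n+1) → ℂ) i = 0
      · simp [hζ, hzi]
      · have hden : t ^ χ i * (z : Fin (n+1) → ℂ) i ^ dExp (n+1) χ ω i ≠ 0 :=
          mul_ne_zero (pow_ne_zero _ ht0) (pow_ne_zero _ hzi)
        simp only [hζ, hzi, if_false]
        rw [div_pow, mul_pow, hτχ i, ← hmain' i, hmain' i]
        exact div_self hden
    have hζ0 : ∀ i, ζ i ≠ 0 := by
      intro i h
      have := hζpow i
      rw [h, zero_pow (hdpos i).ne'] at this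
      exact zero_ne_one this
    have hzz' : ∀ i, (z' : Fin (n+1) → ℂ) i = τ ^ ω i * (ζ i * (z : Fin (n+1) → ℂ) i) := by
      intro i
      by_cases hzi : (z : Fin (n+1) → ℂ) i = 0
      · have h := hmain' i
        rw [hzi, zero_pow (hdpos i).ne', mul_zero] at h
        have hz'i : (z' : Fin (n+1) → ℂ) i = 0 := by
          have := pow_eq_zero_iff (hdpos i).ne' |>.mp h
          exact this
        rw [hz'i, hzi, mul_zero, mul_zero]
      · simp only [hζ, hzi, if_false]
        have hτω : τ ^ ω i ≠ 0 := pow_ne_zero _ hτ0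
        field_simp
    refine ⟨fun i => ⟨Units.mk0 (ζ i) (hζ0 i), ?_⟩, τ, hτabs, ?_⟩
    · rw [_root_.mem_rootsOfUnity]
      ext
      rw [Units.val_pow_eq_pow_val, Units.val_mk0, Units.val_one]
      exact hζpow i
    · intro i
      rw [hzz' i]
      rfl
  -- now assemble
  unfold FiniteGroupQuotientHomeo
  refine ⟨a, ?_, ?_, ?_, ?_⟩
  · intro x
    induction x using Quot.ind with
    | _ z =>
      show Quot.mk (wRel (n+1) ω) (actS 1 z) = Quot.mk (wRel (n+1) ω) z
      congr 1
      apply Subtype.ext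
      funext i
      show (((1 : G) i : ℂˣ) : ℂ) * (z : Fin (n+1) → ℂ) i = (z : Fin (n+1) → ℂ) i
      have h1 : (((1 : G) i : ℂˣ) : ℂ) = 1 := rfl
      rw [h1, one_mul]
  · intro g h x
    induction x using Quot.ind with
    | _ z =>
      show Quot.mk (wRel (n+1) ω) (actS (g * h) z) = Quot.mk (wRel (n+1) ω) (actS g (actS h z))
      congr 1
      apply Subtype.ext
      funext i
      show ((((g * h) i : ℂˣ)) : ℂ) * (z : Fin (n+1) → ℂ) i
        = ((g i : ℂˣ) : ℂ) * (((h i : ℂˣ) : ℂ) * (z : Fin (n+1) → ℂ) i)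
      have h2 : ((((g * h) i : ℂˣ)) : ℂ) = ((g i : ℂˣ) : ℂ) * ((h i : ℂˣ) : ℂ) := rfl
      rw [← mul_assoc, h2]
  · intro g
    refine continuous_quot_lift _ (Continuous.comp continuous_quot_mk ?_)
    apply Continuous.subtype_mk
    exact continuous_pi fun i =>
      continuous_const.mul ((continuous_apply i).comp continuous_subtype_val)
  · -- the homeomorphism
    haveI : CompactSpace (Quot (fun x y => ∃ g : G, a g x = y)) := quot_compactSpace _
    have hFcont : Continuous F := by
      refine continuous_quot_lift _ ?_
      refine continuous_quot_lift _ ?_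
      exact Continuous.comp continuous_quot_mk (psi_continuous (n+1) χ ω)
    have hFsurj : Function.Surjective F := by
      intro y
      induction y using Quot.ind with
      | _ w =>
        obtain ⟨z, hz⟩ := psi_surj w
        refine ⟨Quot.mk _ (Quot.mk _ z), ?_⟩
        show Quot.mk (wRel (n+1) χ) (psi (n+1) χ ω z) = Quot.mk (wRel (n+1) χ) w
        rw [hz]
    have hFinj : Function.Injective F := by
      intro x y hxy
      obtain ⟨X, rfl⟩ := Quot.exists_rep x
      obtain ⟨Y, rfl⟩ := Quot.exists_rep y
      obtain ⟨z, rfl⟩ := Quot.exists_rep X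
      obtain ⟨z', rfl⟩ := Quot.exists_rep Y
      have hrel : wRel (n+1) χ (psi (n+1) χ ω z) (psi (n+1) χ ω z') :=
        (quot_mk_eq_iff (n+1) χ _ _).mp hxy
      obtain ⟨g, t, ht, hco⟩ := psi_inj z z' hrel
      apply Quot.sound
      refine ⟨g, ?_⟩
      show Quot.mk (wRel (n+1) ω) (actS g z) = Quot.mk (wRel (n+1) ω) z'
      exact Quot.sound ⟨t, ht, fun i => hco i⟩
    exact ⟨Continuous.homeoOfEquivCompactToT2
      (f := Equiv.ofBijective F ⟨hFinj, hFsurj⟩) hFcont⟩
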